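/- Every state vertex of a finite digraph D is reachable from some input vertex if and only if every non-top-linked strongly connected component of D (restricted to state vertices) contains a state vertex receiving an edge from some input vertex. -/

import Mathlib

/-- Edge relation of the subgraph induced on state vertices (non-input vertices). -/
def EX {V : Type} (E : V → V → Prop) (isInput : V → Prop) (a b : V) : Prop :=
  ¬ isInput a ∧ ¬ isInput b ∧ E a b

/-- The strongly connected component (within the induced subgraph on state
vertices) of the state vertex `x`. -/
def sccX {V : Type} (E : V → V → Prop) (isInput : V → Prop) (x : V) : Set V :=
  {y | Relation.ReflTransGen (EX E isInput) x y ∧ Relation.ReflTransGen (EX E isInput) y x}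

/-- Let `D` be a finite digraph whose vertices are partitioned
into state vertices and input vertices, where input vertices have no incoming
edges. Then every state vertex is reachable from some input vertex if and only
if every non-top-linked SCC of the induced subgraph on state vertices (an SCC
receiving no edge from a state vertex outside it) contains a state vertex that
receives an edge directly from some input vertex. -/
theorem stmt5 {V : Type} [Fintype V] (E : V → V → Prop) (isInput : V → Prop)
    (hNoIn : ∀ u v : V, isInput v → ¬ E u v) :
    (∀ x : V, ¬ isInput x → ∃ u : V, isInput u ∧ Relation.ReflTransGen E u x) ↔
      (∀ x : V, ¬ isInput x →
        (∀ z : V, ¬ isInput z → z ∉ sccX E isInput x →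
          ∀ y ∈ sccX E isInput x, ¬ E z y) →
        ∃ y ∈ sccX E isInput x, ∃ u : V, isInput u ∧ E u y) := by
  classical
  have hmono : ∀ a b : V, Relation.ReflTransGen (EX E isInput) a b →
      Relation.ReflTransGen E a b := fun a b h =>
    Relation.ReflTransGen.mono (fun x y (hxy : EX E isInput x y) => hxy.2.2) a b h
  -- any E-path into a state from a state lifts to an EX-path
  have L1 : ∀ x : V, ∀ u : V, Relation.ReflTransGen E u x → ¬ isInput u →
      Relation.ReflTransGen (EX E isInput) u x := by
    intro x u h
    induction h using Relation.ReflTransGen.head_induction_on with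
    | refl => intro _; exact Relation.ReflTransGen.refl
    | head h' hpath ih =>
      intro hu
      rename_i a c
      have hc : ¬ isInput c := fun hci => hNoIn a c hci h'
      exact Relation.ReflTransGen.head ⟨hu, hc, h'⟩ (ih hc)
  -- a state vertex of an SCC is a state vertex
  have hstate : ∀ x : V, ¬ isInput x → ∀ y ∈ sccX E isInput x, ¬ isInput y := by
    intro x hx y hy
    rcases Relation.ReflTransGen.cases_tail hy.1 with h | ⟨c, _, hcy⟩
    · rw [h]; exact hx
    · exact hcy.2.1
  constructor
  · -- forward direction
    intro hacc x hx hclosed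
    -- every state reaching x (in EX) is in sccX x, by non-top-linkedness
    have hin : ∀ w : V, Relation.ReflTransGen (EX E isInput) w x →
        w ∈ sccX E isInput x := by
      intro w h
      induction h using Relation.ReflTransGen.head_induction_on with
      | refl => exact ⟨Relation.ReflTransGen.refl, Relation.ReflTransGen.refl⟩
      | head h' hpath ih =>
        rename_i a c
        by_cases ha : a ∈ sccX E isInput x
        · exact ha
        · exact absurd h'.2.2 (hclosed a h'.1 ha c ih)
    obtain ⟨u, hu, hpath⟩ := hacc x hx
    -- decompose the path: first edge from u lands in a state
    have : ∃ w, E u w ∧ ¬ isInput w ∧ Relation.ReflTransGen (EX E isInput) w x := by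
      induction hpath using Relation.ReflTransGen.head_induction_on with
      | refl => exact absurd hu hx
      | head h' hpath2 ih =>
        rename_i a c
        have hc : ¬ isInput c := fun hci => hNoIn a c hci h'
        exact ⟨c, h', hc, L1 x c hpath2 hc⟩
    obtain ⟨w, huw, hw, hwx⟩ := this
    exact ⟨w, hin w hwx, u, hu, huw⟩
  · -- backward direction
    intro H
    have key : ∀ n : ℕ, ∀ x : V, ¬ isInput x →
        {v | Relation.ReflTransGen (EX E isInput) v x}.ncard = n →
        ∃ u : V, isInput u ∧ Relation.ReflTransGen E u x := by
      intro n
      induction n using Nat.strong_induction_on with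
      | _ n ih =>
        intro x hx hcard
        by_cases hcase : ∀ z : V, ¬ isInput z → z ∉ sccX E isInput x →
            ∀ y ∈ sccX E isInput x, ¬ E z y
        · obtain ⟨y, hy, u, hu, huy⟩ := H x hx hcase
          exact ⟨u, hu, Relation.ReflTransGen.head huy (hmono y x hy.2)⟩
        · push_neg at hcase
          obtain ⟨z, hz, hznot, y, hy, hEzy⟩ := hcase
          have hyst : ¬ isInput y := hstate x hx y hy
          have hzx : Relation.ReflTransGen (EX E isInput) z x :=
            Relation.ReflTransGen.head ⟨hz, hyst, hEzy⟩ hy.2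
          have hsub : {v | Relation.ReflTransGen (EX E isInput) v z} ⊆
              {v | Relation.ReflTransGen (EX E isInput) v x} :=
            fun v hv => hv.trans hzx
          have hxnot : x ∉ {v | Relation.ReflTransGen (EX E isInput) v z} := by
            intro hxz
            exact hznot ⟨hxz, hzx⟩
          have hss : {v | Relation.ReflTransGen (EX E isInput) v z} ⊂
              {v | Relation.ReflTransGen (EX E isInput) v x} :=
            (Set.ssubset_iff_of_subset hsub).2
              ⟨x, Relation.ReflTransGen.refl, hxnot⟩
          have hlt : {v | Relation.ReflTransGen (EX E isInput) v z}.ncard < n := by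
            rw [← hcard]
            exact Set.ncard_lt_ncard hss (Set.toFinite _)
          obtain ⟨u, hu, hpath⟩ := ih _ hlt z hz rfl
          exact ⟨u, hu, hpath.trans (hmono z x hzx)⟩
    exact fun x hx => key _ x hx rfl
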